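/- Let ε > 0 and let L : [0,∞) → ℝ be a nonnegative locally Lipschitz function such that for all 0 ≤ s ≤ t, L(t) − L(s) ≤ −ε ∫_s^t √(2·L(u)) du. Then L is nonincreasing, for every t ≥ 0 one has L(t) ≤ (max(√(L(0)) − ε·t/√2, 0))², and in particular L(t) = 0 for all t ≥ √(2·L(0))/ε. -/

import Mathlib

set_option maxHeartbeats 1000000


/-- Lyapunov differential-inequality lemma: if `L : [0,∞) → ℝ` is nonnegative, locally
Lipschitz (i.e. Lipschitz on every compact `[0,A]`), and satisfies the integrated drift bound
`L t - L s ≤ -ε ∫ₛᵗ √(2 L u) du`, then `L` is nonincreasing on `[0,∞)`,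
`L t ≤ (max (√(L 0) - ε t / √2) 0)²` for all `t ≥ 0`, and `L t = 0` for all
`t ≥ √(2 L 0) / ε`. -/
theorem lyapunov_sqrt_drift_hits_zero (ε : ℝ) (hε : 0 < ε) (L : ℝ → ℝ)
    (hL0 : ∀ t, 0 ≤ t → 0 ≤ L t)
    (hlip : ∀ A : ℝ, 0 ≤ A → ∃ K : NNReal, LipschitzOnWith K L (Set.Icc 0 A))
    (hdrift : ∀ s t : ℝ, 0 ≤ s → s ≤ t →
      L t - L s ≤ -ε * ∫ u in s..t, Real.sqrt (2 * L u)) :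
    AntitoneOn L (Set.Ici (0 : ℝ)) ∧
    (∀ t : ℝ, 0 ≤ t →
      L t ≤ (max (Real.sqrt (L 0) - ε * t / Real.sqrt 2) 0) ^ 2) ∧
    (∀ t : ℝ, Real.sqrt (2 * L 0) / ε ≤ t → L t = 0) := by
  have hs2 : Real.sqrt 2 * Real.sqrt 2 = 2 := Real.mul_self_sqrt (by norm_num)
  have hs2pos : 0 < Real.sqrt 2 := Real.sqrt_pos.mpr (by norm_num)
  -- L is nonincreasing on [0,∞)
  have hmono : AntitoneOn L (Set.Ici (0 : ℝ)) := by
    intro s hs u hu hsu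
    have h := hdrift s u hs hsu
    have hI : 0 ≤ ∫ x in s..u, Real.sqrt (2 * L x) :=
      intervalIntegral.integral_nonneg hsu (fun x _ => Real.sqrt_nonneg _)
    have := mul_nonneg hε.le hI
    linarith
  have key : ∀ t : ℝ, 0 ≤ t →
      L t ≤ (max (Real.sqrt (L 0) - ε * t / Real.sqrt 2) 0) ^ 2 := by
    intro t ht
    by_contra hcon
    push_neg at hcon
    set B := max (Real.sqrt (L 0) - ε * t / Real.sqrt 2) 0 with hB
    have hB0 : (0 : ℝ) ≤ B := le_max_right _ _
    have hLt_pos : 0 < L t := lt_of_le_of_lt (sq_nonneg B) hcon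
    set m := Real.sqrt (L t) with hm
    have hm_pos : 0 < m := Real.sqrt_pos.mpr hLt_pos
    have hm_sq : m ^ 2 = L t := Real.sq_sqrt (hL0 t ht)
    have hmB : B < m := by
      have h1 := Real.sqrt_lt_sqrt (sq_nonneg B) hcon
      rwa [Real.sqrt_sq hB0] at h1
    -- t must be positive
    have ht_pos : 0 < t := by
      rcases ht.lt_or_eq with h | h
      · exact h
      · exfalso
        have hB' : B = Real.sqrt (L 0) := by
          rw [hB, ← h]
          simp [Real.sqrt_nonneg]
        rw [hB', Real.sq_sqrt (hL0 0 le_rfl), ← h] at hcon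
        exact lt_irrefl _ hcon
    obtain ⟨K, hK⟩ := hlip t ht
    have hKnn : (0 : ℝ) ≤ (K : ℝ) := K.coe_nonneg
    -- single-step estimate
    have step : ∀ s u : ℝ, 0 ≤ s → s ≤ u → u ≤ t →
        Real.sqrt 2 * ε * (u - s) * m ≤
          (Real.sqrt (L s) - Real.sqrt (L u)) *
            (2 * Real.sqrt (m ^ 2 + (K : ℝ) * (u - s))) := by
      intro s u hs hsu hut
      have hu0 : 0 ≤ u := hs.trans hsu
      have hLu0 : 0 ≤ L u := hL0 u hu0
      have hLs0 : 0 ≤ L s := hL0 s hs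
      have hLtu : L t ≤ L u := hmono (Set.mem_Ici.mpr hu0) (Set.mem_Ici.mpr ht) hut
      have hLus : L u ≤ L s := hmono (Set.mem_Ici.mpr hs) (Set.mem_Ici.mpr hu0) hsu
      set d := u - s with hd
      have hd0 : 0 ≤ d := sub_nonneg.mpr hsu
      -- integral lower bound
      have hsub : Set.uIcc s u ⊆ Set.Icc 0 t := by
        rw [Set.uIcc_of_le hsu]
        exact Set.Icc_subset_Icc hs hut
      have hInt : IntervalIntegrable (fun x => Real.sqrt (2 * L x))
          MeasureTheory.volume s u :=
        ((continuousOn_const.mul (hK.continuousOn.mono hsub)).sqrt).intervalIntegrable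
      have hint : Real.sqrt (2 * L u) * d ≤ ∫ x in s..u, Real.sqrt (2 * L x) := by
        have hcmp : ∫ _x in s..u, Real.sqrt (2 * L u) ≤
            ∫ x in s..u, Real.sqrt (2 * L x) := by
          apply intervalIntegral.integral_mono_on hsu intervalIntegrable_const hInt
          intro x hx
          apply Real.sqrt_le_sqrt
          have hxu : L u ≤ L x :=
            hmono (Set.mem_Ici.mpr (hs.trans hx.1)) (Set.mem_Ici.mpr hu0) hx.2
          linarith
        rw [intervalIntegral.integral_const, smul_eq_mul] at hcmp
        calc Real.sqrt (2 * L u) * d = (u - s) * Real.sqrt (2 * L u) := by ring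
          _ ≤ _ := hcmp
      -- drift estimate
      have hdr : ε * (Real.sqrt (2 * L u) * d) ≤ L s - L u := by
        have h1 := hdrift s u hs hsu
        have h2 := mul_le_mul_of_nonneg_left hint hε.le
        linarith
      set a := Real.sqrt (L u) with ha
      set b := Real.sqrt (L s) with hb
      have ha_sq : a ^ 2 = L u := Real.sq_sqrt hLu0
      have hb_sq : b ^ 2 = L s := Real.sq_sqrt hLs0
      have hma : m ≤ a := Real.sqrt_le_sqrt hLtu
      have hab : a ≤ b := Real.sqrt_le_sqrt hLus
      have ha_pos : 0 < a := lt_of_lt_of_le hm_pos hma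
      -- √(2 L u) = √2 * a
      have hsplit : Real.sqrt (2 * L u) = Real.sqrt 2 * a :=
        Real.sqrt_mul (by norm_num) _
      have hdr' : Real.sqrt 2 * ε * d * a ≤ b ^ 2 - a ^ 2 := by
        rw [hsplit] at hdr
        rw [ha_sq, hb_sq]
        linarith
      -- Lipschitz bound
      have hlipb : L s ≤ L u + (K : ℝ) * d := by
        have hmem_s : s ∈ Set.Icc (0 : ℝ) t := ⟨hs, hsu.trans hut⟩
        have hmem_u : u ∈ Set.Icc (0 : ℝ) t := ⟨hu0, hut⟩
        have := hK.dist_le_mul s hmem_s u hmem_u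
        rw [Real.dist_eq, Real.dist_eq] at this
        have h1 : |L s - L u| ≤ (K : ℝ) * |s - u| := this
        have h2 : |s - u| = d := by
          rw [abs_sub_comm, abs_of_nonneg hd0]
        rw [h2] at h1
        have := le_abs_self (L s - L u)
        linarith
      set c := Real.sqrt (m ^ 2 + (K : ℝ) * d) with hcdef
      set e := Real.sqrt (L u + (K : ℝ) * d) with hedef
      have hc_pos : 0 < c := by
        rw [hcdef]
        exact Real.sqrt_pos.mpr
          (add_pos_of_pos_of_nonneg (pow_pos hm_pos 2) (mul_nonneg hKnn hd0))
      have hbe : b ≤ e := Real.sqrt_le_sqrt hlipb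
      have hae : a ≤ e :=
        Real.sqrt_le_sqrt (le_add_of_nonneg_right (mul_nonneg hKnn hd0))
      -- m * e ≤ a * c
      have hmeac : m * e ≤ a * c := by
        have h1 : m * e = Real.sqrt (L t * (L u + (K : ℝ) * d)) := by
          rw [hm, hedef, ← Real.sqrt_mul (hL0 t ht)]
        have h2 : a * c = Real.sqrt (L u * (L t + (K : ℝ) * d)) := by
          rw [ha, hcdef, hm_sq, ← Real.sqrt_mul hLu0]
        rw [h1, h2]
        apply Real.sqrt_le_sqrt
        have := mul_le_mul_of_nonneg_left hLtu (mul_nonneg hKnn hd0)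
        linarith [this]
      -- combine
      have hba_pos : 0 < b + a := by linarith
      have hfin : Real.sqrt 2 * ε * d * m * (b + a) ≤
          (b - a) * (2 * c) * (b + a) := by
        have hfac : (0:ℝ) ≤ Real.sqrt 2 * ε * d :=
          mul_nonneg (mul_nonneg hs2pos.le hε.le) hd0
        have h1 : Real.sqrt 2 * ε * d * (m * (b + a)) ≤
            Real.sqrt 2 * ε * d * (2 * (a * c)) := by
          apply mul_le_mul_of_nonneg_left _ hfac
          have hx : m * (b + a) ≤ m * (e + e) :=
            mul_le_mul_of_nonneg_left (add_le_add hbe hae) hm_pos.le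
          linarith [hmeac, hx]
        have h2 : (Real.sqrt 2 * ε * d * a) * (2 * c) ≤
            ((b - a) * (b + a)) * (2 * c) := by
          apply mul_le_mul_of_nonneg_right _ (mul_nonneg two_pos.le hc_pos.le)
          linarith [hdr']
        linarith [h1, h2]
      exact le_of_mul_le_mul_right hfin hba_pos
    -- iterate over a uniform partition
    have main : ∀ n : ℕ, ∀ i : ℕ, i ≤ n + 1 →
        Real.sqrt 2 * ε * ((i : ℝ) * (t / (n + 1))) * m ≤
          (Real.sqrt (L 0) - Real.sqrt (L ((i : ℝ) * (t / (n + 1))))) *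
            (2 * Real.sqrt (m ^ 2 + (K : ℝ) * (t / (n + 1)))) := by
      intro n
      have hΔpos : 0 < t / (n + 1 : ℝ) := by positivity
      intro i
      induction i with
      | zero => intro _; simp
      | succ i ih =>
        intro hin
        have hi : i ≤ n + 1 := Nat.le_of_succ_le hin
        have hih := ih hi
        set Δ := t / (n + 1 : ℝ) with hΔ
        have hs0 : 0 ≤ (i : ℝ) * Δ := by positivity
        have hsu : (i : ℝ) * Δ ≤ ((i : ℝ) + 1) * Δ :=
          mul_le_mul_of_nonneg_right (by linarith) hΔpos.le
        have hut : ((i : ℝ) + 1) * Δ ≤ t := by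
          have h1 : ((i : ℝ) + 1) ≤ (n : ℝ) + 1 := by exact_mod_cast hin
          have h2 : ((i : ℝ) + 1) * Δ ≤ ((n : ℝ) + 1) * Δ :=
            mul_le_mul_of_nonneg_right h1 hΔpos.le
          have h3 : ((n : ℝ) + 1) * Δ = t := by
            rw [hΔ]; field_simp
          linarith
        have hstep := step ((i : ℝ) * Δ) (((i : ℝ) + 1) * Δ) hs0 hsu hut
        have hdiff : ((i : ℝ) + 1) * Δ - (i : ℝ) * Δ = Δ := by ring
        rw [hdiff] at hstep
        push_cast
        push_cast at hih
        linarith [hih, hstep]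
    -- pass to the limit n → ∞
    have hfinal : ∀ n : ℕ,
        Real.sqrt 2 * ε * t * m ≤
          (Real.sqrt (L 0) - Real.sqrt (L t)) *
            (2 * Real.sqrt (m ^ 2 + (K : ℝ) * (t / (n + 1)))) := by
      intro n
      have h := main n (n + 1) le_rfl
      have heq : ((n : ℝ) + 1) * (t / (n + 1)) = t := by field_simp
      push_cast at h
      rw [heq] at h
      exact h
    have htend : Filter.Tendsto
        (fun n : ℕ => (Real.sqrt (L 0) - Real.sqrt (L t)) *
          (2 * Real.sqrt (m ^ 2 + (K : ℝ) * (t / (n + 1)))))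
        Filter.atTop
        (nhds ((Real.sqrt (L 0) - Real.sqrt (L t)) * (2 * m))) := by
      have h1 : Filter.Tendsto (fun n : ℕ => t / ((n : ℝ) + 1)) Filter.atTop (nhds 0) := by
        apply Filter.Tendsto.div_atTop tendsto_const_nhds
        exact Filter.tendsto_atTop_add_const_right _ 1 tendsto_natCast_atTop_atTop
      have h2 : Filter.Tendsto (fun n : ℕ => m ^ 2 + (K : ℝ) * (t / (n + 1)))
          Filter.atTop (nhds (m ^ 2 + (K : ℝ) * 0)) :=
        tendsto_const_nhds.add ((h1.const_mul (K : ℝ)))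
      rw [mul_zero, add_zero] at h2
      have h3 := (Real.continuous_sqrt.tendsto (m ^ 2)).comp h2
      rw [Real.sqrt_sq hm_pos.le] at h3
      exact tendsto_const_nhds.mul ((h3.const_mul 2))
    have hlim : Real.sqrt 2 * ε * t * m ≤
        (Real.sqrt (L 0) - Real.sqrt (L t)) * (2 * m) :=
      ge_of_tendsto' htend hfinal
    -- conclude: m ≤ √(L 0) - ε t / √2 ≤ B < m, contradiction
    have h1 : Real.sqrt 2 * ε * t ≤ (Real.sqrt (L 0) - m) * 2 := by
      have hthis := hlim
      rw [← hm] at hthis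
      have h1' : Real.sqrt 2 * ε * t * m ≤ ((Real.sqrt (L 0) - m) * 2) * m := by
        linarith [hthis]
      exact le_of_mul_le_mul_right h1' hm_pos
    have hdiv : ε * t / Real.sqrt 2 = Real.sqrt 2 * ε * t / 2 := by
      rw [div_eq_div_iff hs2pos.ne' (by norm_num : (2:ℝ) ≠ 0)]
      linear_combination (-(ε * t)) * hs2
    have h2 : m ≤ Real.sqrt (L 0) - ε * t / Real.sqrt 2 := by
      rw [hdiv]
      linarith
    have h3 : Real.sqrt (L 0) - ε * t / Real.sqrt 2 ≤ B := le_max_left _ _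
    linarith
  refine ⟨hmono, key, ?_⟩
  intro t ht
  have ht0 : 0 ≤ t := le_trans (div_nonneg (Real.sqrt_nonneg _) hε.le) ht
  have h1 := key t ht0
  have hmax : max (Real.sqrt (L 0) - ε * t / Real.sqrt 2) 0 = 0 := by
    apply max_eq_right
    have hsq : Real.sqrt (2 * L 0) = Real.sqrt 2 * Real.sqrt (L 0) :=
      Real.sqrt_mul (by norm_num) _
    have h2 : Real.sqrt (2 * L 0) ≤ ε * t := by
      rw [div_le_iff₀ hε] at ht
      linarith [ht]
    rw [sub_nonpos, le_div_iff₀ hs2pos]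
    linarith [h2, hsq.symm.le, hsq.le]
  rw [hmax] at h1
  norm_num at h1
  exact le_antisymm h1 (hL0 t ht0)
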